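/- Let $(A = \oplus_{i \in \mathbb{Z}} A_i, \diamond)$ be a $\mathbb{Z}$-graded pre-Lie algebra with all $A_i$ finite-dimensional, and $A^\circ = \oplus_i A_{-i}^*$ its restricted dual. On $A \oplus A^\circ$ define $a \diamond' b = a \diamond b$, $a \diamond' a^* = -L_\diamond^*(a)a^* + R_\diamond^*(a)a^*$, $a^* \diamond' a = R_\diamond^*(a)a^*$, $a^* \diamond' b^* = 0$ for $a, b \in A$, $a^*, b^* \in A^\circ$. Then $(A \oplus A^\circ, \diamond')$ is a pre-Lie algebra, and the skew-symmetric form $\omega(a + a^*, b + b^*) = \langle a^*, b \rangle - \langle b^*, a \rangle$ is nondegenerate and invariant: $\omega(x \diamond' y, z) = -\omega(y, x \diamond' z - z \diamond' x)$. -/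

import Mathlib

/-- Let `(A = ⊕ᵢ Aᵢ, ⋄)` be a `ℤ`-graded pre-Lie algebra with all pieces
finite-dimensional and `A° = ⊕ᵢ A₋ᵢ*` its restricted dual (realized as the set `C` of
functionals vanishing on all but finitely many graded pieces). On `A ⊕ A°` (modeled inside
`A × A*`) define `a ⋄' b = a⋄b`, `a ⋄' a* = -L*(a)a* + R*(a)a*`, `a* ⋄' a = R*(a)a*`,
`a* ⋄' b* = 0`. Then `(A ⊕ A°, ⋄')` is a pre-Lie algebra (in particular `A°` is preserved),
and the skew-symmetric form `ω(a+a*, b+b*) = ⟨a*,b⟩ - ⟨b*,a⟩` is nondegenerate on `A ⊕ A°`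
and invariant: `ω(x⋄'y, z) = -ω(y, x⋄'z - z⋄'x)`. -/
theorem stmt16 {k A : Type*} [Field k] [AddCommGroup A] [Module k A]
    (𝒜 : ℤ → Submodule k A)
    (hfin : ∀ i, FiniteDimensional k (𝒜 i))
    (hint : DirectSum.IsInternal 𝒜)
    (dia : A →ₗ[k] A →ₗ[k] A)
    (hpre : ∀ a b c : A,
      dia (dia a b) c - dia a (dia b c) = dia (dia b a) c - dia b (dia a c))
    (hgr : ∀ (i j : ℤ) (a b : A), a ∈ 𝒜 i → b ∈ 𝒜 j → dia a b ∈ 𝒜 (i + j))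
    (C : Set (Module.Dual k A))
    (hC : ∀ f, f ∈ C ↔ ∃ S : Finset ℤ, ∀ i ∉ S, ∀ a ∈ 𝒜 i, f a = 0)
    (dmd : (A × Module.Dual k A) → (A × Module.Dual k A) → (A × Module.Dual k A))
    (hdmd : ∀ x y : A × Module.Dual k A, dmd x y =
      (dia x.1 y.1,
        -(dia x.1).dualMap y.2 + (dia.flip x.1).dualMap y.2 + (dia.flip y.1).dualMap x.2))
    (ω : (A × Module.Dual k A) → (A × Module.Dual k A) → k)
    (hω : ∀ x y : A × Module.Dual k A, ω x y = x.2 y.1 - y.2 x.1) :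
    (∀ x y : A × Module.Dual k A, x.2 ∈ C → y.2 ∈ C → (dmd x y).2 ∈ C) ∧
    (∀ x y z : A × Module.Dual k A, x.2 ∈ C → y.2 ∈ C → z.2 ∈ C →
      dmd (dmd x y) z - dmd x (dmd y z) = dmd (dmd y x) z - dmd y (dmd x z)) ∧
    (∀ x y : A × Module.Dual k A, ω x y = -ω y x) ∧
    (∀ x y z : A × Module.Dual k A, x.2 ∈ C → y.2 ∈ C → z.2 ∈ C →
      ω (dmd x y) z = -ω y (dmd x z - dmd z x)) ∧
    (∀ x : A × Module.Dual k A, x.2 ∈ C →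
      (∀ y : A × Module.Dual k A, y.2 ∈ C → ω x y = 0) → x = 0) := by
  -- C is closed under addition and negation
  have hCzero : (0 : Module.Dual k A) ∈ C := (hC 0).2 ⟨∅, fun _ _ _ _ => rfl⟩
  have hCadd : ∀ f g, f ∈ C → g ∈ C → f + g ∈ C := by
    intro f g hf hg
    obtain ⟨S, hS⟩ := (hC f).1 hf
    obtain ⟨T, hT⟩ := (hC g).1 hg
    refine (hC _).2 ⟨S ∪ T, fun i hi a ha => ?_⟩
    simp only [Finset.mem_union, not_or] at hi
    simp [hS i hi.1 a ha, hT i hi.2 a ha]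
  have hCneg : ∀ f, f ∈ C → -f ∈ C := by
    intro f hf
    obtain ⟨S, hS⟩ := (hC f).1 hf
    exact (hC _).2 ⟨S, fun i hi a ha => by simp [hS i hi a ha]⟩
  -- key closure lemma
  have key : ∀ (b : A) (f : Module.Dual k A), f ∈ C →
      (dia b).dualMap f ∈ C ∧ (dia.flip b).dualMap f ∈ C := by
    intro b f hf
    have hb : b ∈ ⨆ i, 𝒜 i := by rw [hint.submodule_iSup_eq_top]; trivial
    refine Submodule.iSup_induction (motive := fun b =>
      (dia b).dualMap f ∈ C ∧ (dia.flip b).dualMap f ∈ C) 𝒜 hb ?_ ?_ ?_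
    · intro j b hbj
      obtain ⟨S, hS⟩ := (hC f).1 hf
      constructor
      · refine (hC _).2 ⟨S.image (· - j), fun i hi a ha => ?_⟩
        have : (j + i) ∉ S := by
          intro hmem
          exact hi (Finset.mem_image.2 ⟨j + i, hmem, by ring⟩)
        exact hS _ this _ (hgr j i b a hbj ha)
      · refine (hC _).2 ⟨S.image (· - j), fun i hi a ha => ?_⟩
        have : (i + j) ∉ S := by
          intro hmem
          exact hi (Finset.mem_image.2 ⟨i + j, hmem, by ring⟩)
        exact hS _ this _ (hgr i j a b ha hbj)
    · have h0 : (LinearMap.dualMap (0 : A →ₗ[k] A)) f = 0 := by ext t; simp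
      constructor <;> simp [h0, hCzero]
    · intro x y hx hy
      have h1 : (dia (x + y)).dualMap f = (dia x).dualMap f + (dia y).dualMap f := by
        ext t; simp
      have h2 : (dia.flip (x + y)).dualMap f
          = (dia.flip x).dualMap f + (dia.flip y).dualMap f := by
        ext t; simp
      exact ⟨h1 ▸ hCadd _ _ hx.1 hy.1, h2 ▸ hCadd _ _ hx.2 hy.2⟩
  refine ⟨?_, ?_, ?_, ?_, ?_⟩
  · -- closure
    intro x y hx hy
    rw [hdmd]
    exact hCadd _ _ (hCadd _ _ (hCneg _ (key x.1 y.2 hy).1) (key x.1 y.2 hy).2)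
      (key y.1 x.2 hx).2
  · -- pre-Lie identity
    intro x y z _ _ _
    obtain ⟨a, xd⟩ := x
    obtain ⟨b, yd⟩ := y
    obtain ⟨c, zd⟩ := z
    refine Prod.ext ?_ ?_
    · simp only [hdmd, Prod.fst_sub]
      exact hpre a b c
    · simp only [hdmd, Prod.snd_sub]
      ext t
      have e1 := congrArg zd (hpre a b t)
      have e2 := congrArg zd (hpre t a b)
      have e3 := congrArg zd (hpre t b a)
      have e4 := congrArg yd (hpre t a c)
      have e5 := congrArg xd (hpre t b c)
      simp only [map_sub] at e1 e2 e3 e4 e5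
      simp only [LinearMap.sub_apply, LinearMap.add_apply, LinearMap.neg_apply,
        LinearMap.dualMap_apply, LinearMap.flip_apply, map_add, map_neg, map_sub]
      linear_combination -e1 - e2 + e3 - e4 + e5
  · intro x y; rw [hω, hω]; ring
  · intro x y z _ _ _
    simp only [hω, hdmd, Prod.fst_sub, Prod.snd_sub, LinearMap.sub_apply,
      LinearMap.add_apply, LinearMap.neg_apply, LinearMap.dualMap_apply,
      LinearMap.flip_apply, map_sub]
    ring
  · intro x hx hnd
    have hx2 : x.2 = 0 := by
      ext b
      have := hnd (b, 0) hCzero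
      rw [hω] at this
      simpa using this
    have hx1 : x.1 = 0 := by
      set e := LinearEquiv.ofBijective (DirectSum.coeLinearMap 𝒜) hint with he
      have hkill : ∀ f ∈ C, f x.1 = 0 := by
        intro f hf
        have := hnd (0, f) hf
        rw [hω] at this
        simpa [hx2] using this
      have hcomp : ∀ i : ℤ, (e.symm x.1) i = 0 := by
        intro i
        rw [← Module.forall_dual_apply_eq_zero_iff k]
        intro g
        set f : Module.Dual k A := g ∘ₗ (DirectSum.component k ℤ (fun i => 𝒜 i) i) ∘ₗ
          (e.symm : A →ₗ[k] DirectSum ℤ fun i => 𝒜 i) with hfdef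
        have hfC : f ∈ C := by
          refine (hC f).2 ⟨{i}, fun j hj a ha => ?_⟩
          have hji : j ≠ i := by simpa using hj
          have : e.symm a = DirectSum.of (fun i => (𝒜 i : Type _)) j ⟨a, ha⟩ := by
            apply e.injective
            simp [he, LinearEquiv.ofBijective_apply, DirectSum.coeLinearMap_of]
            exact (DirectSum.coeLinearMap_of (A := 𝒜) j ⟨a, ha⟩).symm
          have hz : ((DirectSum.of (fun i => (𝒜 i : Type _)) j) ⟨a, ha⟩) i = 0 :=
            DirectSum.of_eq_of_ne _ _ _ hji.symm
          simp only [hfdef, LinearMap.comp_apply, LinearEquiv.coe_coe, this,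
            DirectSum.component]
          exact (congrArg g hz).trans (map_zero g)
        have := hkill f hfC
        exact this
      have h0 : e.symm x.1 = 0 := DFinsupp.ext hcomp
      have h1 := e.apply_symm_apply x.1
      rw [h0] at h1
      rw [← h1]
      exact e.toLinearMap.map_zero
    exact Prod.ext_iff.2 ⟨hx1, hx2⟩
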